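/- Let q ≥ 2 and let u be an integer with u ≥ q³+q². Define Ψ(u) = {(d,e) ∈ ℤ² : e ≥ 0, 0 ≤ d < q+1, (q²+q)e + q²d ≤ u}. Then #Ψ(u) = (−q² + q + 2)/2 + ⌊u/q⌋. -/
import Mathlib

open Finset

/-- Hermite-type identity: for `0 ≤ b < n`, `∑_{d<n} ⌊(b+d)/n⌋ = b`. -/
private lemma hermite_sum_nat (n : ℤ) (hn : 0 < n) :
    ∀ k : ℕ, (k : ℤ) < n →
      ∑ d ∈ Finset.range n.toNat, ((k : ℤ) + (d : ℤ)) / n = (k : ℤ) := by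
  intro k
  induction k with
  | zero =>
    intro _
    apply Finset.sum_eq_zero
    intro d hd
    have hdn : (d : ℤ) < n := by
      have := Finset.mem_range.mp hd
      omega
    simpa using Int.ediv_eq_zero_of_lt (by positivity) hdn
  | succ b ih =>
    intro hlt
    have hb : (0 : ℤ) ≤ (b : ℤ) := by positivity
    have hb' : (b : ℤ) < n := by push_cast at hlt ⊢; omega
    have hS := ih hb'
    set N := n.toNat with hN
    have hNn : (N : ℤ) = n := Int.toNat_of_nonneg hn.le
    have h1 : ∑ d ∈ Finset.range (N + 1), ((b : ℤ) + (d : ℤ)) / n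
        = ∑ d ∈ Finset.range N, ((b : ℤ) + (d : ℤ)) / n + ((b : ℤ) + (N : ℤ)) / n :=
      Finset.sum_range_succ _ N
    have h2 : ∑ d ∈ Finset.range (N + 1), ((b : ℤ) + (d : ℤ)) / n
        = ∑ d ∈ Finset.range N, ((b : ℤ) + ((d : ℤ) + 1)) / n + ((b : ℤ) + (0 : ℤ)) / n := by
      simpa using Finset.sum_range_succ' (fun d : ℕ => ((b : ℤ) + (d : ℤ)) / n) N
    have hb0 : ((b : ℤ) + (0 : ℤ)) / n = 0 := by
      simpa using Int.ediv_eq_zero_of_lt hb hb'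
    have hbN : ((b : ℤ) + (N : ℤ)) / n = 1 := by
      rw [hNn]
      have he : (b : ℤ) + n = (b : ℤ) + 1 * n := by ring
      rw [he, Int.add_mul_ediv_right _ _ hn.ne']
      rw [Int.ediv_eq_zero_of_lt hb hb']
      norm_num
    have hshift : ∑ d ∈ Finset.range N, ((b : ℤ) + ((d : ℤ) + 1)) / n
        = ∑ d ∈ Finset.range N, ((b : ℤ) + 1 + (d : ℤ)) / n := by
      apply Finset.sum_congr rfl
      intro d _
      ring_nf
    rw [hshift, hb0, add_zero] at h2
    rw [h2, hS, hbN] at h1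
    push_cast
    omega

private lemma hermite_sum (n : ℤ) (hn : 0 < n) (b : ℤ) (hb : 0 ≤ b) (hbn : b < n) :
    ∑ d ∈ Finset.range n.toNat, (b + (d : ℤ)) / n = b := by
  have h := hermite_sum_nat n hn b.toNat (by omega)
  rwa [Int.toNat_of_nonneg hb] at h

private lemma sum_Icc_to_range (q : ℤ) (hq : 0 ≤ q) (f : ℤ → ℤ) :
    ∑ d ∈ Finset.Icc (0 : ℤ) q, f d
      = ∑ i ∈ Finset.range (q + 1).toNat, f (i : ℤ) := by
  apply Finset.sum_nbij' (fun d : ℤ => d.toNat) (fun i : ℕ => (i : ℤ))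
  · intro d hd
    simp only [Finset.mem_Icc] at hd
    simp only [Finset.mem_range]
    omega
  · intro i hi
    simp only [Finset.mem_range] at hi
    simp only [Finset.mem_Icc]
    omega
  · intro d hd
    simp only [Finset.mem_Icc] at hd
    omega
  · intro i _
    simp
  · intro d hd
    simp only [Finset.mem_Icc] at hd
    rw [Int.toNat_of_nonneg hd.1]

theorem stmt_3 (q u : ℤ) (hq : 2 ≤ q) (hu : q ^ 3 + q ^ 2 ≤ u) :
    (({p : ℤ × ℤ | 0 ≤ p.2 ∧ 0 ≤ p.1 ∧ p.1 < q + 1 ∧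
        (q ^ 2 + q) * p.2 + q ^ 2 * p.1 ≤ u}).ncard : ℤ)
      = (-q ^ 2 + q + 2) / 2 + u / q := by
  have hq0 : (0 : ℤ) < q := by omega
  have hqq : (0 : ℤ) < q ^ 2 + q := by nlinarith
  -- the finite set
  set T : Finset (ℤ × ℤ) :=
    (Finset.Icc (0 : ℤ) q).biUnion
      (fun d => (Finset.Icc (0 : ℤ) ((u - q ^ 2 * d) / (q ^ 2 + q))).image
        (fun e => (d, e))) with hT
  have hset : {p : ℤ × ℤ | 0 ≤ p.2 ∧ 0 ≤ p.1 ∧ p.1 < q + 1 ∧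
      (q ^ 2 + q) * p.2 + q ^ 2 * p.1 ≤ u} = ↑T := by
    ext ⟨d, e⟩
    simp only [hT, Set.mem_setOf_eq, Finset.coe_biUnion, Set.mem_iUnion,
      Finset.mem_coe, Finset.mem_Icc, Finset.mem_image]
    constructor
    · rintro ⟨he, hd0, hd1, hle⟩
      refine ⟨d, ⟨hd0, by omega⟩, e, ⟨he, ?_⟩, rfl⟩
      rw [Int.le_ediv_iff_mul_le hqq]
      nlinarith
    · rintro ⟨d', ⟨hd0, hd1⟩, e', ⟨he0, he1⟩, heq⟩
      obtain ⟨rfl, rfl⟩ := Prod.mk.injEq .. ▸ heq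
      rw [Int.le_ediv_iff_mul_le hqq] at he1
      exact ⟨he0, hd0, by omega, by nlinarith⟩
  rw [hset, Set.ncard_coe_finset]
  -- cardinality of T as a sum
  have hcard : T.card = ∑ d ∈ Finset.Icc (0 : ℤ) q,
      ((u - q ^ 2 * d) / (q ^ 2 + q) + 1).toNat := by
    rw [hT, Finset.card_biUnion]
    · apply Finset.sum_congr rfl
      intro d _
      rw [Finset.card_image_of_injective _ (fun a b h => by simpa using h),
        Int.card_Icc]
      congr 1
      omega
    · intro x _ y _ hxy
      simp only [Finset.disjoint_left, Finset.mem_image, Finset.mem_Icc]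
      rintro ⟨a, b⟩ ⟨e1, he1, h1⟩ ⟨e2, he2, h2⟩
      apply hxy
      rw [Prod.ext_iff] at h1 h2
      omega
  have hNd : ∀ d ∈ Finset.Icc (0 : ℤ) q, 0 ≤ (u - q ^ 2 * d) / (q ^ 2 + q) := by
    intro d hd
    simp only [Finset.mem_Icc] at hd
    apply Int.ediv_nonneg _ hqq.le
    nlinarith
  have hcast : (T.card : ℤ) = ∑ d ∈ Finset.Icc (0 : ℤ) q,
      ((u - q ^ 2 * d) / (q ^ 2 + q) + 1) := by
    rw [hcard, Nat.cast_sum]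
    apply Finset.sum_congr rfl
    intro d hd
    rw [Int.toNat_of_nonneg (by have := hNd d hd; omega)]
  rw [hcast]
  -- rewrite each term
  set M : ℤ := u / q with hM
  have hterm : ∀ d ∈ Finset.Icc (0 : ℤ) q,
      (u - q ^ 2 * d) / (q ^ 2 + q) + 1 = (M + d) / (q + 1) - d + 1 := by
    intro d hd
    simp only [Finset.mem_Icc] at hd
    set s : ℤ := (M + d) / (q + 1) with hs
    set t : ℤ := (M + d) % (q + 1) with ht
    have hst : (q + 1) * s + t = M + d := Int.mul_ediv_add_emod _ _
    have ht0 : 0 ≤ t := Int.emod_nonneg _ (by omega)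
    have ht1 : t < q + 1 := Int.emod_lt_of_pos _ (by omega)
    have hr : q * M + u % q = u := Int.mul_ediv_add_emod u q
    have hr0 : 0 ≤ u % q := Int.emod_nonneg _ hq0.ne'
    have hr1 : u % q < q := Int.emod_lt_of_pos _ hq0
    have hdecomp : u - q ^ 2 * d = (q * t + u % q) + (s - d) * (q ^ 2 + q) := by
      linear_combination (-q) * hst - hr
    rw [hdecomp, Int.add_mul_ediv_right _ _ hqq.ne',
      Int.ediv_eq_zero_of_lt (by nlinarith) (by nlinarith)]
    ring
  rw [Finset.sum_congr rfl hterm]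
  rw [sum_Icc_to_range q hq0.le]
  set N : ℕ := (q + 1).toNat with hN
  have hNq : (N : ℤ) = q + 1 := Int.toNat_of_nonneg (by omega)
  -- split the sum
  have hsplit : ∑ i ∈ Finset.range N, ((M + (i : ℤ)) / (q + 1) - (i : ℤ) + 1)
      = (∑ i ∈ Finset.range N, (M + (i : ℤ)) / (q + 1))
        - (∑ i ∈ Finset.range N, (i : ℤ)) + N := by
    rw [Finset.sum_add_distrib, Finset.sum_sub_distrib]
    simp
  rw [hsplit]
  -- Hermite part
  set a : ℤ := M / (q + 1) with ha
  set b : ℤ := M % (q + 1) with hb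
  have hab : (q + 1) * a + b = M := Int.mul_ediv_add_emod _ _
  have hb0 : 0 ≤ b := Int.emod_nonneg _ (by omega)
  have hb1 : b < q + 1 := Int.emod_lt_of_pos _ (by omega)
  have hmain : ∑ i ∈ Finset.range N, (M + (i : ℤ)) / (q + 1) = M := by
    have hcong : ∀ i ∈ Finset.range N,
        (M + (i : ℤ)) / (q + 1) = (b + (i : ℤ)) / (q + 1) + a := by
      intro i _
      have : M + (i : ℤ) = (b + (i : ℤ)) + a * (q + 1) := by linarith
      rw [this, Int.add_mul_ediv_right _ _ (by omega : (q : ℤ) + 1 ≠ 0)]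
    rw [Finset.sum_congr rfl hcong, Finset.sum_add_distrib]
    have hher : ∑ i ∈ Finset.range N, (b + (i : ℤ)) / (q + 1) = b := by
      have := hermite_sum (q + 1) (by omega) b hb0 hb1
      simpa [hN] using this
    rw [hher]
    simp only [Finset.sum_const, Finset.card_range, nsmul_eq_mul]
    rw [hNq]; linarith
  rw [hmain]
  -- Gauss sum
  set G : ℤ := ∑ i ∈ Finset.range N, (i : ℤ) with hG
  have hgauss : 2 * G = (q + 1) * q := by
    have hN1 : 1 ≤ N := by omega
    have h := congrArg (fun k : ℕ => (k : ℤ)) (Finset.sum_range_id_mul_two N)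
    push_cast [Nat.cast_sub hN1] at h
    rw [hNq] at h
    have he : ((q : ℤ) + 1) * ((q + 1) - 1) = (q + 1) * q := by ring
    rw [he] at h
    rw [hG]
    linarith [h]
  have hkey : (-q ^ 2 + q + 2) / 2 = q + 1 - G := by
    have h2 : -q ^ 2 + q + 2 = 2 * (q + 1 - G) := by nlinarith
    rw [h2, Int.mul_ediv_cancel_left _ two_ne_zero]
  rw [hkey, hNq]
  ring
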